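/- Under the GDA updates x_t = x_{t−1} − η_x ∇_x f(x_{t−1}, y_{t−1}) and y_t = P_Y(y_{t−1} + (1/ℓ)∇_y f(x_{t−1}, y_{t−1})), with f ℓ-smooth and f(x,·) μ-strongly concave on convex Y, κ = ℓ/μ ≥ 2, letting δ_t = ‖y*(x_t) − y_t‖² and Φ(x) = max_{y∈Y} f(x,y), one has δ_t ≤ (1 − 1/(2κ) + 4κ³ℓ²η_x²) δ_{t−1} + 4κ³η_x² ‖∇Φ(x_{t−1})‖². -/

import Mathlib

open Set
open scoped RealInnerProductSpace

open Filter
open scoped Topology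

section Aux

variable {E : Type*} [NormedAddCommGroup E] [InnerProductSpace ℝ E] [CompleteSpace E]

/-- Derivative along a line from a gradient. -/
lemma lineDeriv_of_gradient {f : E → ℝ} {G : E} {a d : E} {t : ℝ}
    (hf : HasGradientAt f G (a + t • d)) :
    HasDerivAt (fun s : ℝ => f (a + s • d)) ⟪G, d⟫ t := by
  have hc : HasDerivAt (fun s : ℝ => a + s • d) d t := by
    simpa using ((hasDerivAt_id t).smul_const d).const_add a
  have := hf.hasFDerivAt.comp_hasDerivAt t hc
  simpa [Function.comp_def, InnerProductSpace.toDual_apply_apply] using this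

/-- Lower bound on a derivative coming from right slopes. -/
lemma le_deriv_of_slope {ψ : ℝ → ℝ} {d c : ℝ} (hd : HasDerivAt ψ d 0)
    (h : ∀ a ∈ Set.Ioc (0:ℝ) 1, c ≤ (ψ a - ψ 0) / a) : c ≤ d := by
  have ht : Tendsto (slope ψ 0) (𝓝[>] 0) (𝓝 d) :=
    (hasDerivAt_iff_tendsto_slope.1 hd).mono_left
      (nhdsWithin_mono _ fun x hx => ne_of_gt hx)
  refine ge_of_tendsto ht ?_
  filter_upwards [Ioc_mem_nhdsGT_of_mem (Set.left_mem_Ico.2 one_pos)] with a ha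
  simpa [slope_def_field, sub_zero, div_eq_mul_inv] using h a ha

/-- First-order condition for strong concavity. -/
lemma strongConcave_first_order {Y : Set E} {μ : ℝ} {f : E → ℝ} {G yy z : E}
    (hf : StrongConcaveOn Y μ f) (hG : HasGradientAt f G yy)
    (hy : yy ∈ Y) (hz : z ∈ Y) :
    f z + μ / 2 * ‖z - yy‖ ^ 2 ≤ f yy + ⟪G, z - yy⟫ := by
  set d := z - yy with hd
  have hG' : HasGradientAt f G (yy + (0:ℝ) • d) := by simpa using hG
  have hder : HasDerivAt (fun s : ℝ => f (yy + s • d)) ⟪G, d⟫ 0 := lineDeriv_of_gradient hG'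
  have hslope : ∀ a ∈ Set.Ioc (0:ℝ) 1,
      f z - f yy + (1 - a) * (μ / 2) * ‖z - yy‖ ^ 2
        ≤ (f (yy + a • d) - f (yy + (0:ℝ) • d)) / a := by
    intro a ha
    have h1 : (0:ℝ) ≤ a := le_of_lt ha.1
    have h2 : (0:ℝ) ≤ 1 - a := by linarith [ha.2]
    have := hf.2 hz hy h1 h2 (by ring)
    have hpt : a • z + (1 - a) • yy = yy + a • d := by
      simp [hd, smul_sub, sub_smul]; abel
    rw [hpt] at this
    rw [le_div_iff₀ ha.1]
    simp only [smul_eq_mul] at this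
    simp only [zero_smul, add_zero]
    nlinarith [this]
  have htend : Tendsto (fun a : ℝ => f z - f yy + (1 - a) * (μ / 2) * ‖z - yy‖ ^ 2)
      (𝓝[>] (0:ℝ)) (𝓝 (f z - f yy + (1 - 0) * (μ / 2) * ‖z - yy‖ ^ 2)) := by
    apply Tendsto.mono_left _ nhdsWithin_le_nhds
    exact (continuous_const.add (((continuous_const.sub continuous_id).mul continuous_const).mul
      continuous_const)).tendsto 0
  have ht : Tendsto (slope (fun s : ℝ => f (yy + s • d)) 0) (𝓝[>] 0) (𝓝 ⟪G, d⟫) :=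
    (hasDerivAt_iff_tendsto_slope.1 hder).mono_left
      (nhdsWithin_mono _ fun x hx => ne_of_gt hx)
  have key : f z - f yy + (1 - 0) * (μ / 2) * ‖z - yy‖ ^ 2 ≤ ⟪G, d⟫ := by
    refine le_of_tendsto_of_tendsto htend ht ?_
    filter_upwards [Ioc_mem_nhdsGT_of_mem (Set.left_mem_Ico.2 one_pos)] with a ha
    have := hslope a ha
    simpa [slope_def_field, sub_zero] using this
  simp only [one_mul, sub_zero] at key
  linarith [key]

/-- Variational inequality at a constrained maximum. -/
lemma vi_of_isMaxOn {Y : Set E} {f : E → ℝ} {G yy z : E}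
    (hYconv : Convex ℝ Y) (hmax : IsMaxOn f Y yy) (hG : HasGradientAt f G yy)
    (hy : yy ∈ Y) (hz : z ∈ Y) : ⟪G, z - yy⟫ ≤ 0 := by
  set d := z - yy with hd
  have hG' : HasGradientAt f G (yy + (0:ℝ) • d) := by simpa using hG
  have hder : HasDerivAt (fun s : ℝ => f (yy + s • d)) ⟪G, d⟫ 0 := lineDeriv_of_gradient hG'
  have key : (0:ℝ) ≤ -⟪G, d⟫ := by
    refine le_deriv_of_slope (ψ := fun s : ℝ => -f (yy + s • d)) hder.neg ?_
    intro a ha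
    have hmem : yy + a • d ∈ Y := by
      have := hYconv hy hz (by linarith [ha.1, ha.2] : (0:ℝ) ≤ 1 - a) (le_of_lt ha.1) (by ring)
      have hpt : (1 - a) • yy + a • z = yy + a • d := by
        simp [hd, smul_sub, sub_smul]; abel
      rwa [hpt] at this
    have hle : f (yy + a • d) ≤ f yy := hmax hmem
    have hpos : (0:ℝ) < a := ha.1
    rw [le_div_iff₀ hpos]
    simp only [zero_smul, add_zero]
    nlinarith [hle]
  linarith [key]

/-- Descent lemma (concave direction): quadratic lower bound. -/
lemma descent_lemma {f : E → ℝ} {g : E → E} {L : ℝ}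
    (hg : ∀ p, HasGradientAt f (g p) p)
    (hlip : ∀ p q : E, ‖g p - g q‖ ≤ L * ‖p - q‖) (a b : E) :
    f a + ⟪g a, b - a⟫ - L / 2 * ‖b - a‖ ^ 2 ≤ f b := by
  set d := b - a with hd
  set φ : ℝ → ℝ := fun t => f (a + t • d) - t * ⟪g a, d⟫ + L * ‖d‖ ^ 2 * t ^ 2 / 2 with hφdef
  have hder : ∀ t : ℝ, HasDerivAt φ
      (⟪g (a + t • d), d⟫ - ⟪g a, d⟫ + L * ‖d‖ ^ 2 * t) t := by
    intro t
    have h1 : HasDerivAt (fun s : ℝ => f (a + s • d)) ⟪g (a + t • d), d⟫ t :=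
      lineDeriv_of_gradient (hg _)
    have h2 : HasDerivAt (fun s : ℝ => s * ⟪g a, d⟫) ⟪g a, d⟫ t := by
      simpa using (hasDerivAt_id t).mul_const ⟪g a, d⟫
    have h3 : HasDerivAt (fun s : ℝ => L * ‖d‖ ^ 2 * s ^ 2 / 2)
        (L * ‖d‖ ^ 2 * t) t := by
      have := ((hasDerivAt_pow 2 t).const_mul (L * ‖d‖ ^ 2)).div_const 2
      convert this using 1
      · rfl
      · rfl
      · norm_num; ring
    exact (h1.sub h2).add h3
  have hmono : MonotoneOn φ (Icc (0:ℝ) 1) := by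
    apply monotoneOn_of_deriv_nonneg (convex_Icc 0 1)
    · exact (fun t _ => ((hder t).differentiableAt.continuousAt.continuousWithinAt))
    · intro t ht
      exact ((hder t).differentiableAt).differentiableWithinAt
    · intro t ht
      rw [interior_Icc] at ht
      rw [(hder t).deriv]
      have h1 : ‖g (a + t • d) - g a‖ ≤ L * (t * ‖d‖) := by
        have := hlip (a + t • d) a
        simpa [norm_smul, abs_of_pos ht.1] using this
      have h2 : -(L * (t * ‖d‖)) * ‖d‖ ≤ ⟪g (a + t • d) - g a, d⟫ := by
        have := abs_real_inner_le_norm (g (a + t • d) - g a) d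
        have h3 : ‖g (a + t • d) - g a‖ * ‖d‖ ≤ L * (t * ‖d‖) * ‖d‖ :=
          mul_le_mul_of_nonneg_right h1 (norm_nonneg _)
        nlinarith [abs_le.1 this]
      rw [inner_sub_left] at h2
      nlinarith [h2]
  have h01 := hmono (left_mem_Icc.2 zero_le_one) (right_mem_Icc.2 zero_le_one) zero_le_one
  simp only [hφdef, zero_smul, add_zero, one_smul, zero_mul, sub_zero, zero_pow, mul_zero,
    one_pow, mul_one, zero_div, add_zero, zero_add] at h01
  have : a + d = b := by simp [hd]
  rw [this] at h01
  linarith [h01]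

/-- Contraction of one projected gradient ascent step. -/
lemma pga_contraction {Y : Set E} {f : E → ℝ} {g : E → E} {μ ℓ : ℝ}
    (hℓ : 0 < ℓ)
    (hconc : StrongConcaveOn Y μ f) (hg : ∀ p, HasGradientAt f (g p) p)
    (hlip : ∀ p q : E, ‖g p - g q‖ ≤ ℓ * ‖p - q‖)
    {w s q : E} (hw : w ∈ Y) (hs : s ∈ Y) (hmax : IsMaxOn f Y s)
    (hqY : q ∈ Y) (hproj : ∀ u ∈ Y, ⟪w + (1 / ℓ) • g w - q, u - q⟫ ≤ 0) :
    ℓ * ‖q - s‖ ^ 2 ≤ (ℓ - μ) * ‖w - s‖ ^ 2 := by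
  have h1 := descent_lemma hg hlip w q
  have h2 := strongConcave_first_order hconc (hg w) hw hs
  have h4 : f q ≤ f s := hmax hqY
  have h3 := hproj s hs
  have hsplit : ⟪w + (1 / ℓ) • g w - q, s - q⟫
      = ⟪w - q, s - q⟫ + (1 / ℓ) * ⟪g w, s - q⟫ := by
    have hv : w + (1 / ℓ) • g w - q = (w - q) + (1 / ℓ) • g w := by abel
    rw [hv, inner_add_left, real_inner_smul_left]
  rw [hsplit] at h3
  have hwq : ⟪w - q, s - q⟫ = -⟪q - w, s - q⟫ := by
    have : w - q = -(q - w) := by abel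
    rw [this, inner_neg_left]
  rw [hwq] at h3
  have h3' : ⟪g w, s - q⟫ ≤ ℓ * ⟪q - w, s - q⟫ := by
    have := mul_le_mul_of_nonneg_left h3 hℓ.le
    have hne : ℓ ≠ 0 := hℓ.ne'
    field_simp at this
    nlinarith [this]
  have hgsq : ⟪g w, s - q⟫ = ⟪g w, s - w⟫ - ⟪g w, q - w⟫ := by
    have : s - q = (s - w) - (q - w) := by abel
    rw [this, inner_sub_right]
  have hkey : μ / 2 * ‖s - w‖ ^ 2 - ℓ / 2 * ‖q - w‖ ^ 2 ≤ ℓ * ⟪q - w, s - q⟫ := by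
    nlinarith [h1, h2, h4, h3', hgsq]
  have hexp : ‖q - s‖ ^ 2 = ‖q - w‖ ^ 2 - 2 * ⟪q - w, s - w⟫ + ‖s - w‖ ^ 2 := by
    have hqs : q - s = (q - w) - (s - w) := by abel
    rw [hqs, norm_sub_sq_real]
  have hisq : ⟪q - w, s - q⟫ = ⟪q - w, s - w⟫ - ‖q - w‖ ^ 2 := by
    have hsq2 : s - q = (s - w) - (q - w) := by abel
    rw [hsq2, inner_sub_right, real_inner_self_eq_norm_sq]
  have hnorm : ‖s - w‖ = ‖w - s‖ := norm_sub_rev _ _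
  rw [hnorm] at hkey hexp
  nlinarith [hkey, hexp]

/-- Lipschitz-type bound for the argmax. -/
lemma ystar_lip {Y : Set E} {μ C : ℝ} {f1 f2 : E → ℝ} {u v G1u G1v G2v : E}
    (hYconv : Convex ℝ Y) (hu : u ∈ Y) (hv : v ∈ Y)
    (hconc1 : StrongConcaveOn Y μ f1)
    (hg1u : HasGradientAt f1 G1u u) (hg1v : HasGradientAt f1 G1v v)
    (hmax1 : IsMaxOn f1 Y u) (hmax2 : IsMaxOn f2 Y v) (hg2v : HasGradientAt f2 G2v v)
    (hC : ‖G1v - G2v‖ ≤ C) :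
    μ * ‖v - u‖ ^ 2 ≤ C * ‖v - u‖ := by
  have m1 := strongConcave_first_order hconc1 hg1u hu hv
  have m2 := strongConcave_first_order hconc1 hg1v hv hu
  have vi1 := vi_of_isMaxOn hYconv hmax1 hg1u hu hv
  have vi2 := vi_of_isMaxOn hYconv hmax2 hg2v hv hu
  have hsplit : ⟪G1v, u - v⟫ = ⟪G1v - G2v, u - v⟫ + ⟪G2v, u - v⟫ := by
    rw [inner_sub_left]; ring
  have cs : ⟪G1v - G2v, u - v⟫ ≤ ‖G1v - G2v‖ * ‖u - v‖ := real_inner_le_norm _ _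
  have hmul : ‖G1v - G2v‖ * ‖u - v‖ ≤ C * ‖u - v‖ :=
    mul_le_mul_of_nonneg_right hC (norm_nonneg _)
  have hnorm : ‖u - v‖ = ‖v - u‖ := norm_sub_rev _ _
  rw [hnorm] at cs hmul
  rw [hnorm] at m2
  linarith [m1, m2, vi1, vi2, hsplit, cs, hmul]


end Aux

/-- Final pure-real algebra. -/
lemma final_algebra {A B D G g0 ℓ μ ηx : ℝ} (hℓ : 0 < ℓ) (hμ : 0 < μ) (hηx : 0 < ηx)
    (hk2 : 2 ≤ ℓ / μ)
    (hAnn : 0 ≤ A) (hBnn : 0 ≤ B) (hDnn : 0 ≤ D) (hGnn : 0 ≤ G) (hg0nn : 0 ≤ g0)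
    (hB2 : ℓ * B ^ 2 ≤ (ℓ - μ) * D ^ 2)
    (hA2 : μ * A ≤ ℓ * (ηx * G))
    (hGb : G ≤ g0 + ℓ * D) :
    (A + B) ^ 2 ≤ (1 - 1 / (2 * (ℓ / μ)) + 4 * (ℓ / μ) ^ 3 * ℓ ^ 2 * ηx ^ 2) * D ^ 2
      + 4 * (ℓ / μ) ^ 3 * ηx ^ 2 * g0 ^ 2 := by
  set k : ℝ := ℓ / μ with hkdef
  have hkpos : 0 < k := div_pos hℓ hμ
  have hkμ : k * μ = ℓ := div_mul_cancel₀ ℓ hμ.ne'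
  have h2k1 : (0:ℝ) < 2 * k - 1 := by linarith
  have stepB : B ^ 2 ≤ (1 - 1 / k) * D ^ 2 := by
    have hone : 1 / k = μ / ℓ := by rw [hkdef, one_div_div]
    have heq : ℓ * ((1 - 1 / k) * D ^ 2) = (ℓ - μ) * D ^ 2 := by
      rw [hone]
      field_simp
    have : ℓ * B ^ 2 ≤ ℓ * ((1 - 1 / k) * D ^ 2) := by rw [heq]; exact hB2
    exact le_of_mul_le_mul_left this hℓ
  have stepA : A ≤ k * ηx * G := by
    have : μ * A ≤ μ * (k * ηx * G) := by
      rw [show μ * (k * ηx * G) = (k * μ) * (ηx * G) by ring, hkμ]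
      exact hA2
    exact le_of_mul_le_mul_left this hμ
  have stepA2 : A ^ 2 ≤ (k * ηx * G) ^ 2 := pow_le_pow_left₀ hAnn stepA 2
  have stepG2 : G ^ 2 ≤ 2 * g0 ^ 2 + 2 * ℓ ^ 2 * D ^ 2 := by
    nlinarith [mul_le_mul hGb hGb hGnn (by positivity : (0:ℝ) ≤ g0 + ℓ * D),
      sq_nonneg (g0 - ℓ * D)]
  have c3 : (2 * k - 1) * (A + B) ^ 2 ≤ 2 * k * B ^ 2 + 2 * k * (2 * k - 1) * A ^ 2 := by
    nlinarith [sq_nonneg (B - (2 * k - 1) * A)]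
  have e1 : 2 * k * (1 - 1 / k) = 2 * k - 2 := by
    field_simp
  have e2 : (2 * k - 1) * (1 - 1 / (2 * k)) = 2 * k - 2 + 1 / (2 * k) := by
    field_simp
    ring
  have c4 : 2 * k * B ^ 2 ≤ (2 * k - 2) * D ^ 2 := by
    have h := mul_le_mul_of_nonneg_left stepB (by positivity : (0:ℝ) ≤ 2 * k)
    calc 2 * k * B ^ 2 ≤ 2 * k * ((1 - 1 / k) * D ^ 2) := h
      _ = (2 * k - 2) * D ^ 2 := by rw [show 2 * k * ((1 - 1 / k) * D ^ 2)
            = (2 * k * (1 - 1 / k)) * D ^ 2 by ring, e1]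
  have c5 : (A + B) ^ 2 ≤ (1 - 1 / (2 * k)) * D ^ 2 + 2 * k * A ^ 2 := by
    have hmul : (2 * k - 1) * (A + B) ^ 2
        ≤ (2 * k - 1) * ((1 - 1 / (2 * k)) * D ^ 2 + 2 * k * A ^ 2) := by
      have h12k : 0 ≤ 1 / (2 * k) := by positivity
      have expand : (2 * k - 1) * ((1 - 1 / (2 * k)) * D ^ 2 + 2 * k * A ^ 2)
          = (2 * k - 2 + 1 / (2 * k)) * D ^ 2 + 2 * k * (2 * k - 1) * A ^ 2 := by
        rw [mul_add, show (2 * k - 1) * ((1 - 1 / (2 * k)) * D ^ 2)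
          = ((2 * k - 1) * (1 - 1 / (2 * k))) * D ^ 2 by ring, e2]
        ring
      rw [expand]
      nlinarith [c3, c4, sq_nonneg D]
    exact le_of_mul_le_mul_left hmul h2k1
  have c6 : A ^ 2 ≤ k ^ 2 * ηx ^ 2 * (2 * g0 ^ 2 + 2 * ℓ ^ 2 * D ^ 2) := by
    calc A ^ 2 ≤ (k * ηx * G) ^ 2 := stepA2
      _ = k ^ 2 * ηx ^ 2 * G ^ 2 := by ring
      _ ≤ k ^ 2 * ηx ^ 2 * (2 * g0 ^ 2 + 2 * ℓ ^ 2 * D ^ 2) :=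
          mul_le_mul_of_nonneg_left stepG2 (by positivity)
  calc (A + B) ^ 2 ≤ (1 - 1 / (2 * k)) * D ^ 2 + 2 * k * A ^ 2 := c5
    _ ≤ (1 - 1 / (2 * k)) * D ^ 2
        + 2 * k * (k ^ 2 * ηx ^ 2 * (2 * g0 ^ 2 + 2 * ℓ ^ 2 * D ^ 2)) := by
        have := mul_le_mul_of_nonneg_left c6 (by positivity : (0:ℝ) ≤ 2 * k)
        linarith
    _ = (1 - 1 / (2 * k) + 4 * k ^ 3 * ℓ ^ 2 * ηx ^ 2) * D ^ 2
        + 4 * k ^ 3 * ηx ^ 2 * g0 ^ 2 := by ring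


/-- Tracking-error recursion for two-time-scale GDA in the
nonconvex-strongly-concave setting: with `δ_t = ‖y*(x_t) − y_t‖²` and
`κ = ℓ/μ ≥ 2`, `δ_t ≤ (1 − 1/(2κ) + 4κ³ℓ²η_x²) δ_{t−1} + 4κ³η_x² ‖∇Φ(x_{t−1})‖²`,
where `∇Φ(x) = ∇_x f(x, y*(x))`. -/
theorem statement9 {m n : ℕ} (f : EuclideanSpace ℝ (Fin m) → EuclideanSpace ℝ (Fin n) → ℝ)
    (ℓ μ ηx : ℝ) (hℓ : 0 < ℓ) (hμ : 0 < μ) (hκ : 2 ≤ ℓ / μ) (hηx : 0 < ηx)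
    (Y : Set (EuclideanSpace ℝ (Fin n))) (hYconv : Convex ℝ Y) (hYclosed : IsClosed Y)
    (hYbdd : Bornology.IsBounded Y) (hYne : Y.Nonempty)
    (gx : EuclideanSpace ℝ (Fin m) → EuclideanSpace ℝ (Fin n) → EuclideanSpace ℝ (Fin m))
    (gy : EuclideanSpace ℝ (Fin m) → EuclideanSpace ℝ (Fin n) → EuclideanSpace ℝ (Fin n))
    (hgx : ∀ x y, HasGradientAt (fun x' => f x' y) (gx x y) x)
    (hgy : ∀ x y, HasGradientAt (fun y' => f x y') (gy x y) y)
    (hsmooth : ∀ x x' y y',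
      ‖gx x y - gx x' y'‖ ≤ ℓ * (‖x - x'‖ + ‖y - y'‖) ∧
      ‖gy x y - gy x' y'‖ ≤ ℓ * (‖x - x'‖ + ‖y - y'‖))
    (hconc : ∀ x, StrongConcaveOn Y μ (f x))
    (P : EuclideanSpace ℝ (Fin n) → EuclideanSpace ℝ (Fin n))
    (hP : ∀ z, P z ∈ Y ∧ ∀ y ∈ Y, ⟪z - P z, y - P z⟫ ≤ 0)
    (ystar : EuclideanSpace ℝ (Fin m) → EuclideanSpace ℝ (Fin n))
    (hystar : ∀ x, ystar x ∈ Y ∧ IsMaxOn (f x) Y (ystar x))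
    (x : ℕ → EuclideanSpace ℝ (Fin m)) (y : ℕ → EuclideanSpace ℝ (Fin n))
    (hy0 : y 0 ∈ Y)
    (hxupd : ∀ t, x (t + 1) = x t - ηx • gx (x t) (y t))
    (hyupd : ∀ t, y (t + 1) = P (y t + (1 / ℓ) • gy (x t) (y t))) :
    ∀ t, ‖ystar (x (t + 1)) - y (t + 1)‖ ^ 2 ≤
      (1 - 1 / (2 * (ℓ / μ)) + 4 * (ℓ / μ) ^ 3 * ℓ ^ 2 * ηx ^ 2) * ‖ystar (x t) - y t‖ ^ 2
        + 4 * (ℓ / μ) ^ 3 * ηx ^ 2 * ‖gx (x t) (ystar (x t))‖ ^ 2 := by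
  have hmem : ∀ t, y t ∈ Y := by
    intro t
    induction t with
    | zero => exact hy0
    | succ t _ => rw [hyupd]; exact (hP _).1
  intro t
  have huY : ystar (x t) ∈ Y := (hystar _).1
  have hvY : ystar (x (t + 1)) ∈ Y := (hystar _).1
  -- contraction of the projected ascent step
  have hlipy : ∀ p q : EuclideanSpace ℝ (Fin n),
      ‖gy (x t) p - gy (x t) q‖ ≤ ℓ * ‖p - q‖ := by
    intro p q
    have := (hsmooth (x t) (x t) p q).2
    simpa using this
  have hproj : ∀ w ∈ Y, ⟪y t + (1 / ℓ) • gy (x t) (y t) - y (t + 1), w - y (t + 1)⟫ ≤ 0 := by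
    intro w hw
    rw [hyupd]
    exact (hP _).2 w hw
  have hB2 : ℓ * ‖ystar (x t) - y (t + 1)‖ ^ 2 ≤ (ℓ - μ) * ‖ystar (x t) - y t‖ ^ 2 := by
    have h := pga_contraction hℓ (hconc (x t)) (hgy (x t)) hlipy (hmem t) huY
      (hystar (x t)).2 (hmem (t + 1)) hproj
    rwa [norm_sub_rev (y (t + 1)), norm_sub_rev (y t)] at h
  -- Lipschitzness of the argmax
  have lip : ‖gy (x t) (ystar (x (t + 1))) - gy (x (t + 1)) (ystar (x (t + 1)))‖
      ≤ ℓ * ‖x (t + 1) - x t‖ := by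
    have := (hsmooth (x t) (x (t + 1)) (ystar (x (t + 1))) (ystar (x (t + 1)))).2
    have hre : ‖x t - x (t + 1)‖ = ‖x (t + 1) - x t‖ := norm_sub_rev _ _
    simpa [hre] using this
  have hlips : μ * ‖ystar (x (t + 1)) - ystar (x t)‖ ^ 2
      ≤ ℓ * ‖x (t + 1) - x t‖ * ‖ystar (x (t + 1)) - ystar (x t)‖ :=
    ystar_lip hYconv huY hvY (hconc (x t)) (hgy (x t) (ystar (x t)))
      (hgy (x t) (ystar (x (t + 1)))) (hystar (x t)).2 (hystar (x (t + 1))).2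
      (hgy (x (t + 1)) (ystar (x (t + 1)))) lip
  have hxd : ‖x (t + 1) - x t‖ = ηx * ‖gx (x t) (y t)‖ := by
    rw [hxupd]
    have h : x t - ηx • gx (x t) (y t) - x t = -(ηx • gx (x t) (y t)) := by abel
    rw [h, norm_neg, norm_smul, Real.norm_eq_abs, abs_of_pos hηx]
  have hA2 : μ * ‖ystar (x (t + 1)) - ystar (x t)‖ ≤ ℓ * (ηx * ‖gx (x t) (y t)‖) := by
    rw [hxd] at hlips
    rcases eq_or_lt_of_le (norm_nonneg (ystar (x (t + 1)) - ystar (x t))) with h0 | hApos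
    · rw [← h0, mul_zero]
      positivity
    · have h : (μ * ‖ystar (x (t + 1)) - ystar (x t)‖) * ‖ystar (x (t + 1)) - ystar (x t)‖
          ≤ (ℓ * (ηx * ‖gx (x t) (y t)‖)) * ‖ystar (x (t + 1)) - ystar (x t)‖ := by
        nlinarith [hlips]
      exact le_of_mul_le_mul_right h hApos
  -- bound on the gradient at y t
  have hGb : ‖gx (x t) (y t)‖ ≤ ‖gx (x t) (ystar (x t))‖ + ℓ * ‖ystar (x t) - y t‖ := by
    have htr : ‖gx (x t) (y t)‖ ≤ ‖gx (x t) (ystar (x t))‖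
        + ‖gx (x t) (y t) - gx (x t) (ystar (x t))‖ := norm_le_insert' _ _
    have hl : ‖gx (x t) (y t) - gx (x t) (ystar (x t))‖ ≤ ℓ * ‖y t - ystar (x t)‖ := by
      have := (hsmooth (x t) (x t) (y t) (ystar (x t))).1
      simpa using this
    rw [norm_sub_rev (y t)] at hl
    linarith
  -- triangle inequality
  have htri : ‖ystar (x (t + 1)) - y (t + 1)‖
      ≤ ‖ystar (x (t + 1)) - ystar (x t)‖ + ‖ystar (x t) - y (t + 1)‖ := by
    have h : ystar (x (t + 1)) - y (t + 1)
        = (ystar (x (t + 1)) - ystar (x t)) + (ystar (x t) - y (t + 1)) := by abel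
    rw [h]
    exact norm_add_le _ _
  have hfin := final_algebra hℓ hμ hηx hκ (norm_nonneg (ystar (x (t + 1)) - ystar (x t)))
    (norm_nonneg (ystar (x t) - y (t + 1))) (norm_nonneg (ystar (x t) - y t))
    (norm_nonneg (gx (x t) (y t))) (norm_nonneg (gx (x t) (ystar (x t)))) hB2 hA2 hGb
  calc ‖ystar (x (t + 1)) - y (t + 1)‖ ^ 2
      ≤ (‖ystar (x (t + 1)) - ystar (x t)‖ + ‖ystar (x t) - y (t + 1)‖) ^ 2 :=
        pow_le_pow_left₀ (norm_nonneg _) htri 2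
    _ ≤ (1 - 1 / (2 * (ℓ / μ)) + 4 * (ℓ / μ) ^ 3 * ℓ ^ 2 * ηx ^ 2) * ‖ystar (x t) - y t‖ ^ 2
        + 4 * (ℓ / μ) ^ 3 * ηx ^ 2 * ‖gx (x t) (ystar (x t))‖ ^ 2 := hfin
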